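/- Let y : ℝ≥0 → ℝ solve ẏ = −2k(1 − y)y with k > 0 and initial condition y(0) = y₀ ∈ [0, 1). Then y(t) ∈ [0, 1) for all t ≥ 0, y is non-increasing, and y(t) ≤ y₀·e^{−2k(1−y₀)t}. -/

import Mathlib

open Real Filter Set

lemma lin_ode_aux (y a : ℝ → ℝ) (ha : Continuous a)
    (h : ∀ t ≥ (0:ℝ), HasDerivAt y (a t * y t) t) :
    ∀ t ≥ (0:ℝ), y t = y 0 * Real.exp (∫ s in (0:ℝ)..t, a s) := by
  intro T hT
  set A : ℝ → ℝ := fun t => ∫ s in (0:ℝ)..t, a s with hA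
  have hAderiv : ∀ t : ℝ, HasDerivAt A (a t) t := by
    intro t
    exact intervalIntegral.integral_hasDerivAt_right
      (ha.intervalIntegrable _ _)
      (ha.stronglyMeasurable.stronglyMeasurableAtFilter) ha.continuousAt
  set g : ℝ → ℝ := fun t => y t * Real.exp (-(A t)) with hg
  have hgd : ∀ t ≥ (0:ℝ), HasDerivAt g 0 t := by
    intro t ht
    have h1 := (h t ht).mul ((hAderiv t).neg.exp)
    exact h1.congr_deriv (by ring)
  have hcont : ContinuousOn g (Icc 0 T) := by
    intro t ht
    exact (((h t ht.1).continuousAt).mul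
      (((hAderiv t).neg.exp).continuousAt)).continuousWithinAt
  have key : g T = g 0 :=
    constant_of_has_deriv_right_zero hcont
      (fun x hx => (hgd x hx.1).hasDerivWithinAt) T (right_mem_Icc.mpr hT)
  have hA0 : A 0 = 0 := intervalIntegral.integral_same
  have hkey : y T * Real.exp (-(A T)) = y 0 := by simpa [hg, hA0] using key
  rw [← hkey, Real.exp_neg]
  field_simp
  rfl

theorem stmt11 (k : ℝ) (hk : 0 < k) (y : ℝ → ℝ) (y0 : ℝ)
    (hode : ∀ t ≥ (0:ℝ), HasDerivAt y (-2 * k * (1 - y t) * y t) t)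
    (hy0 : y 0 = y0) (hy0mem : y0 ∈ Set.Ico (0:ℝ) 1) :
    (∀ t ≥ (0:ℝ), y t ∈ Set.Ico (0:ℝ) 1)
    ∧ AntitoneOn y (Set.Ici (0:ℝ))
    ∧ ∀ t ≥ (0:ℝ), y t ≤ y0 * Real.exp (-2 * k * (1 - y0) * t) := by
  have hcy : ContinuousOn y (Ici 0) :=
    fun t ht => (hode t ht).continuousAt.continuousWithinAt
  have hymax : Continuous (fun t => y (max t 0)) :=
    hcy.comp_continuous (continuous_id.max continuous_const) (fun x => le_max_right x 0)
  set a : ℝ → ℝ := fun t => -2 * k * (1 - y (max t 0)) with ha_def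
  have ha : Continuous a := (continuous_const.mul (continuous_const.sub hymax))
  have hy_eq : ∀ t ≥ (0:ℝ), y t = y0 * Real.exp (∫ s in (0:ℝ)..t, a s) := by
    have := lin_ode_aux y a ha (fun t ht => by
      have : a t * y t = -2 * k * (1 - y t) * y t := by
        simp only [ha_def, max_eq_left ht]
      rw [this]; exact hode t ht)
    simpa [hy0] using this
  set b : ℝ → ℝ := fun t => 2 * k * y (max t 0) with hb_def
  have hb : Continuous b := continuous_const.mul hymax
  have hz_eq : ∀ t ≥ (0:ℝ), 1 - y t = (1 - y0) * Real.exp (∫ s in (0:ℝ)..t, b s) := by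
    have := lin_ode_aux (fun t => 1 - y t) b hb (fun t ht => by
      have h1 := (hode t ht).const_sub 1
      exact h1.congr_deriv (by
        simp only [hb_def, max_eq_left ht]
        ring))
    simpa [hy0] using this
  have hmem : ∀ t ≥ (0:ℝ), y t ∈ Set.Ico (0:ℝ) 1 := by
    intro t ht
    constructor
    · rw [hy_eq t ht]
      exact mul_nonneg hy0mem.1 (Real.exp_pos _).le
    · have h1 : 0 < 1 - y t := by
        rw [hz_eq t ht]
        exact mul_pos (by linarith [hy0mem.2]) (Real.exp_pos _)
      linarith
  have hanti : AntitoneOn y (Ici 0) := by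
    apply antitoneOn_of_deriv_nonpos (convex_Ici 0) hcy
    · intro x hx
      rw [interior_Ici] at hx
      exact (hode x hx.le).differentiableAt.differentiableWithinAt
    · intro x hx
      rw [interior_Ici] at hx
      rw [(hode x hx.le).deriv]
      have h := hmem x hx.le
      nlinarith [mul_nonneg (mul_nonneg hk.le (sub_nonneg.mpr h.2.le)) h.1]
  refine ⟨hmem, hanti, ?_⟩
  intro t ht
  rw [hy_eq t ht]
  have hint : (∫ s in (0:ℝ)..t, a s) ≤ -2 * k * (1 - y0) * t := by
    have h1 : (∫ s in (0:ℝ)..t, a s) ≤ ∫ s in (0:ℝ)..t, (-2 * k * (1 - y0)) := by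
      apply intervalIntegral.integral_mono_on ht (ha.intervalIntegrable _ _)
        (intervalIntegrable_const)
      intro s hs
      have hys : y s ≤ y0 := by
        rw [← hy0]
        exact hanti (self_mem_Ici) hs.1 hs.1
      simp only [ha_def, max_eq_left hs.1]
      nlinarith
    have h2 : (∫ s in (0:ℝ)..t, (-2 * k * (1 - y0))) = -2 * k * (1 - y0) * t := by
      simp; ring
    linarith [h1, h2.symm.trans_le (le_refl _), h2 ▸ h1]
  exact mul_le_mul_of_nonneg_left (Real.exp_le_exp.mpr hint) hy0mem.1
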